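/- Let T : ℕ → ℕ → ℝ be any triangular array satisfying the symmetry T(n, i) = T(n, n−i) for all 0 ≤ i ≤ n. Then for all natural numbers k, m, n, F(k·n + 2m) · Σ_{i=0}^{n} T(n, i) = Σ_{i=0}^{n} T(n, i)·F(k·i + m)·L(k·(n−i) + m). -/

import Mathlib

noncomputable def genFib (a b : ℝ) : ℕ → ℝ
  | 0 => 0
  | 1 => 1
  | n + 2 => a * genFib a b (n + 1) + b * genFib a b n

noncomputable def genLuc (a b : ℝ) : ℕ → ℝ
  | 0 => 2
  | 1 => a
  | n + 2 => a * genLuc a b (n + 1) + b * genLuc a b n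

lemma genLuc_eq (a b : ℝ) : ∀ p, genLuc a b p = 2 * genFib a b (p + 1) - a * genFib a b p := by
  intro p
  induction p using Nat.twoStepInduction with
  | zero => simp [genLuc, genFib]
  | one => simp [genLuc, genFib]; ring
  | more p ih1 ih2 =>
    show genLuc a b (p + 2) = 2 * genFib a b (p + 1 + 2) - a * genFib a b (p + 2)
    rw [show genLuc a b (p+2) = a * genLuc a b (p+1) + b * genLuc a b p from rfl,
      show genFib a b (p+1+2) = a * genFib a b (p+2) + b * genFib a b (p+1) from rfl,
      show genFib a b (p+2) = a * genFib a b (p+1) + b * genFib a b p from rfl, ih1, ih2,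
      show genFib a b (p+1+1) = a * genFib a b (p+1) + b * genFib a b p from rfl]
    ring

lemma fib_luc_add (a b : ℝ) (p : ℕ) : ∀ q,
    genFib a b p * genLuc a b q + genFib a b q * genLuc a b p
      = 2 * genFib a b (p + q) := by
  intro q
  induction q using Nat.twoStepInduction with
  | zero => simp [genFib, genLuc]; ring
  | one =>
    simp only [genFib, genLuc, genLuc_eq]
    ring
  | more q ih1 ih2 =>
    have h1 : genLuc a b (q + 2) = a * genLuc a b (q+1) + b * genLuc a b q := rfl
    have h2 : genFib a b (q + 2) = a * genFib a b (q+1) + b * genFib a b q := rfl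
    have h3 : genFib a b (p + (q + 2)) = a * genFib a b (p + q + 1) + b * genFib a b (p + q) := by
      rw [show p + (q+2) = (p+q) + 2 by ring]; rfl
    have h4 : p + (q + 1) = p + q + 1 := by ring
    rw [h1, h2, h3]
    rw [h4] at ih2
    linear_combination a * ih2 + b * ih1

theorem genFib_symm_triangle (a b : ℝ) (T : ℕ → ℕ → ℝ)
    (hT : ∀ n i, i ≤ n → T n i = T n (n - i)) (k m n : ℕ) :
    genFib a b (k * n + 2 * m) * ∑ i ∈ Finset.range (n + 1), T n i =
      ∑ i ∈ Finset.range (n + 1),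
        T n i * genFib a b (k * i + m) * genLuc a b (k * (n - i) + m) := by
  have hrefl : ∑ i ∈ Finset.range (n + 1),
      T n i * genFib a b (k * i + m) * genLuc a b (k * (n - i) + m)
      = ∑ i ∈ Finset.range (n + 1),
        T n i * genFib a b (k * (n - i) + m) * genLuc a b (k * i + m) := by
    rw [← Finset.sum_range_reflect]
    apply Finset.sum_congr rfl
    intro i hi
    have hi' : i ≤ n := Nat.lt_succ_iff.mp (Finset.mem_range.mp hi)
    have h1 : n + 1 - 1 - i = n - i := by omega
    have h2 : n - (n - i) = i := by omega
    rw [h1, ← hT n i hi', h2]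
  have key : 2 * (∑ i ∈ Finset.range (n + 1),
      T n i * genFib a b (k * i + m) * genLuc a b (k * (n - i) + m))
      = 2 * (genFib a b (k * n + 2 * m) * ∑ i ∈ Finset.range (n + 1), T n i) := by
    nth_rewrite 1 [two_mul]
    nth_rewrite 2 [hrefl]
    rw [← Finset.sum_add_distrib, Finset.mul_sum, Finset.mul_sum]
    apply Finset.sum_congr rfl
    intro i hi
    have hi' : i ≤ n := Nat.lt_succ_iff.mp (Finset.mem_range.mp hi)
    have hadd : (k * i + m) + (k * (n - i) + m) = k * n + 2 * m := by
      have : k * i + k * (n - i) = k * n := by rw [← Nat.mul_add]; congr 1; omega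
      omega
    have := fib_luc_add a b (k * i + m) (k * (n - i) + m)
    rw [hadd] at this
    linear_combination T n i * this
  linarith [key]
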